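/- Let H be a real Hilbert space, let μ, L ∈ ℝ with μ < L and L > 0, and let f : H → ℝ be Fréchet differentiable such that x ↦ f(x) − (μ/2)‖x‖² is convex and x ↦ (L/2)‖x‖² − f(x) is convex. Then for all x, y ∈ H, f(x) ≥ f(y) + ⟨∇f(y), x − y⟩ + (μ/2)‖x − y‖² + (1/(2(L−μ)))‖∇f(x) − ∇f(y) − μ(x − y)‖². -/

import Mathlib

open scoped RealInnerProductSpace

section Aux

variable {H : Type*} [NormedAddCommGroup H] [InnerProductSpace ℝ H] [CompleteSpace H]

lemma lineNormSq_hasDerivAt (y d : H) :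
    HasDerivAt (fun t : ℝ => ‖y + t • d‖ ^ 2) (2 * ⟪y, d⟫) 0 := by
  have heq : (fun t : ℝ => ‖y + t • d‖ ^ 2)
      = fun t : ℝ => ‖y‖ ^ 2 + 2 * ⟪y, d⟫ * t + ‖d‖ ^ 2 * t ^ 2 := by
    funext t
    rw [norm_add_sq_real, real_inner_smul_right, norm_smul]
    simp [mul_pow, sq_abs]
    ring
  rw [heq]
  have hid : HasDerivAt (fun t : ℝ => t) 1 0 := hasDerivAt_id 0
  have hsq : HasDerivAt (fun t : ℝ => t ^ 2) 0 0 := by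
    simpa using hasDerivAt_pow 2 (0 : ℝ)
  have := ((HasDerivAt.const_mul (2 * ⟪y, d⟫) hid).const_add (‖y‖ ^ 2)).add
    (HasDerivAt.const_mul (‖d‖ ^ 2) hsq)
  exact this.congr_deriv (by ring)

lemma lineComp_hasDerivAt (f : H → ℝ) (gy y d : H) (hf : HasGradientAt f gy y) :
    HasDerivAt (fun t : ℝ => f (y + t • d)) ⟪gy, d⟫ 0 := by
  have hline : HasDerivAt (fun t : ℝ => y + t • d) d 0 := by
    simpa using ((hasDerivAt_id (0 : ℝ)).smul_const d).const_add y
  have hF : HasFDerivAt f (InnerProductSpace.toDual ℝ H gy) (y + (0 : ℝ) • d) := by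
    simpa using hasGradientAt_iff_hasFDerivAt.mp hf
  exact (hF.comp_hasDerivAt 0 hline).congr_deriv (by simp)

lemma convex_tangent_le (h : H → ℝ) (hc : ConvexOn ℝ Set.univ h) (y z : H) (c : ℝ)
    (hd : HasDerivAt (fun t : ℝ => h (y + t • (z - y))) c 0) : h y + c ≤ h z := by
  have hφ : ConvexOn ℝ Set.univ fun t : ℝ => h (y + t • (z - y)) := by
    have h2 := hc.comp_affineMap (AffineMap.lineMap y z : ℝ →ᵃ[ℝ] H)
    have : (fun t : ℝ => h (y + t • (z - y))) = h ∘ (AffineMap.lineMap y z : ℝ →ᵃ[ℝ] H) := by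
      funext t
      simp [AffineMap.lineMap_apply, add_comm]
    rw [this]
    simpa using h2
  have hs := hφ.le_slope_of_hasDerivAt (Set.mem_univ (0 : ℝ)) (Set.mem_univ (1 : ℝ)) one_pos hd
  simp [slope_def_field] at hs
  linarith

end Aux

/-- Necessity direction of the interpolation theorem for `F_{μ,L}(H)`:
the two-point inequality satisfied by smooth strongly/weakly convex functions. -/
theorem smooth_strongly_convex_two_point_inequality
    {H : Type*} [NormedAddCommGroup H] [InnerProductSpace ℝ H] [CompleteSpace H]
    (μ L : ℝ) (hμL : μ < L) (hL : 0 < L)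
    (f : H → ℝ) (g : H → H)
    (hdiff : ∀ x, HasGradientAt f (g x) x)
    (hconv₁ : ConvexOn ℝ Set.univ (fun x => f x - μ / 2 * ‖x‖ ^ 2))
    (hconv₂ : ConvexOn ℝ Set.univ (fun x => L / 2 * ‖x‖ ^ 2 - f x)) :
    ∀ x y : H, f x ≥ f y + ⟪g y, x - y⟫ + μ / 2 * ‖x - y‖ ^ 2 +
      1 / (2 * (L - μ)) * ‖g x - g y - μ • (x - y)‖ ^ 2 := by
  intro x y
  have hℓ : 0 < L - μ := sub_pos.mpr hμL
  set D : H := g x - g y - μ • (x - y) with hD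
  set z : H := x - (L - μ)⁻¹ • D with hz
  have hdA : HasDerivAt (fun t : ℝ => f (y + t • (z - y)) - μ / 2 * ‖y + t • (z - y)‖ ^ 2)
      (⟪g y, z - y⟫ - μ / 2 * (2 * ⟪y, z - y⟫)) 0 :=
    (lineComp_hasDerivAt f (g y) y (z - y) (hdiff y)).sub
      (HasDerivAt.const_mul (μ / 2) (lineNormSq_hasDerivAt y (z - y)))
  have hA := convex_tangent_le _ hconv₁ y z _ hdA
  have hdB : HasDerivAt (fun t : ℝ => L / 2 * ‖x + t • (z - x)‖ ^ 2 - f (x + t • (z - x)))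
      (L / 2 * (2 * ⟪x, z - x⟫) - ⟪g x, z - x⟫) 0 :=
    (HasDerivAt.const_mul (L / 2) (lineNormSq_hasDerivAt x (z - x))).sub
      (lineComp_hasDerivAt f (g x) x (z - x) (hdiff x))
  have hB := convex_tangent_le _ hconv₂ x z _ hdB
  have hkey : (⟪g y, z - y⟫ - μ / 2 * (2 * ⟪y, z - y⟫))
      + (L / 2 * (2 * ⟪x, z - x⟫) - ⟪g x, z - x⟫)
      - μ / 2 * ‖y‖ ^ 2 + L / 2 * ‖x‖ ^ 2 - (L - μ) / 2 * ‖z‖ ^ 2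
      = ⟪g y, x - y⟫ + μ / 2 * ‖x - y‖ ^ 2 + 1 / (2 * (L - μ)) * ‖D‖ ^ 2 := by
    rw [hz, hD]
    simp only [← real_inner_self_eq_norm_sq, inner_sub_left, inner_sub_right,
      inner_add_left, inner_add_right, real_inner_smul_left, real_inner_smul_right]
    simp only [real_inner_comm y x, real_inner_comm (g x) x, real_inner_comm (g y) x,
      real_inner_comm (g x) y, real_inner_comm (g y) y, real_inner_comm (g y) (g x)]
    field_simp
    ring
  linarith [hA, hB]
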